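/- Let C_e be a symmetric n×n real matrix with n distinct eigenvalues λ₁ > ⋯ > λ_n and spectral gap g := min_{i≠j}|λ_i − λ_j| > 0. Then for every orthogonal matrix M, with A := Mᵀ C_e M and f(M) := (1/2)‖off(A)‖_F², the diagonal separation satisfies min_{i≠j}|A_{ii} − A_{jj}| ≥ g − 2√(2 f(M)); equivalently, δ(M) ≥ g − 2‖off(A)‖_F. -/
import Mathlib

set_option maxHeartbeats 1000000

open Matrix

/-- The diagonal matrix whose diagonal agrees with `X`. -/
noncomputable def diagPart {n : ℕ} (X : Matrix (Fin n) (Fin n) ℝ) :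
    Matrix (Fin n) (Fin n) ℝ :=
  Matrix.diagonal (fun i => X i i)

/-- Frobenius norm of a real square matrix. -/
noncomputable def frobNorm {n : ℕ} (X : Matrix (Fin n) (Fin n) ℝ) : ℝ :=
  Real.sqrt (∑ i, ∑ j, (X i j) ^ 2)

/-- Rotated covariance `A(M) = Mᵀ C_e M`. -/
noncomputable def rotA {n : ℕ} (Ce M : Matrix (Fin n) (Fin n) ℝ) :
    Matrix (Fin n) (Fin n) ℝ := Mᵀ * Ce * M

/-- The diagonalization objective `f(M) = (1/2)‖off(A(M))‖_F²`. -/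
noncomputable def objF {n : ℕ} (Ce M : Matrix (Fin n) (Fin n) ℝ) : ℝ :=
  (1 / 2) * frobNorm (rotA Ce M - diagPart (rotA Ce M)) ^ 2

lemma conj_diag_apply {n : ℕ} (U : Matrix (Fin n) (Fin n) ℝ) (d : Fin n → ℝ) (k l : Fin n) :
    (Uᵀ * Matrix.diagonal d * U) k l = ∑ m, d m * (U m k * U m l) := by
  rw [Matrix.mul_apply]
  apply Finset.sum_congr rfl
  intro m _
  rw [Matrix.mul_diagonal, Matrix.transpose_apply]
  ring

lemma key_ineq {n : ℕ} (lam a b : Fin n → ℝ) (g α β ri rj ε : ℝ)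
    (hgap : ∀ i j : Fin n, i ≠ j → g ≤ |lam i - lam j|)
    (ha : ∑ k, a k ^ 2 = 1) (hb : ∑ k, b k ^ 2 = 1)
    (hab : ∑ k, a k * b k = 0)
    (hε : 0 ≤ ε)
    (hres1 : ∑ k, a k ^ 2 * (lam k - α) ^ 2 ≤ ri)
    (hres2 : ∑ k, b k ^ 2 * (lam k - β) ^ 2 ≤ rj)
    (hrj : 0 ≤ rj)
    (hsum : ri + rj ≤ ε ^ 2) :
    g - 2 * ε ≤ |α - β| := by
  by_contra hcon
  push_neg at hcon
  set d := |α - β| with hd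
  have hd0 : 0 ≤ d := abs_nonneg _
  have hri : 0 ≤ ri := le_trans (Finset.sum_nonneg (fun k _ => by positivity)) hres1
  have hεlt : ε < g - ε - d := by linarith
  -- ri, rj ≤ ε²
  have hriε : ri ≤ ε ^ 2 := by linarith
  have hsqri : Real.sqrt ri ≤ ε := by
    calc Real.sqrt ri ≤ Real.sqrt (ε ^ 2) := Real.sqrt_le_sqrt hriε
    _ = ε := Real.sqrt_sq hε
  -- exists k₀ with (lam k₀ - α)² ≤ ri
  obtain ⟨k0, hk0⟩ : ∃ k : Fin n, (lam k - α) ^ 2 ≤ ri := by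
    by_contra hno
    push_neg at hno
    obtain ⟨k1, hk1⟩ : ∃ k : Fin n, a k ≠ 0 := by
      by_contra hall
      push_neg at hall
      rw [Finset.sum_eq_zero (fun k _ => by rw [hall k]; ring)] at ha
      norm_num at ha
    have hlt : ∑ k, a k ^ 2 * ri < ∑ k, a k ^ 2 * (lam k - α) ^ 2 := by
      apply Finset.sum_lt_sum
      · intro k _; exact mul_le_mul_of_nonneg_left (le_of_lt (hno k)) (sq_nonneg _)
      · exact ⟨k1, Finset.mem_univ _, by
          have := hno k1
          have ha1 : 0 < a k1 ^ 2 := by positivity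
          nlinarith⟩
    rw [← Finset.sum_mul, ha, one_mul] at hlt
    linarith
  have hk0α : |lam k0 - α| ≤ ε := by
    calc |lam k0 - α| = Real.sqrt ((lam k0 - α) ^ 2) := (Real.sqrt_sq_eq_abs _).symm
    _ ≤ Real.sqrt ri := Real.sqrt_le_sqrt hk0
    _ ≤ ε := hsqri
  set s : ℝ := g - ε with hs
  set t : ℝ := g - ε - d with ht
  have ht0 : 0 < t := by linarith
  have hst : t ≤ s := by linarith
  -- bounds for k ≠ k₀
  have hαk : ∀ k : Fin n, k ≠ k0 → s ^ 2 ≤ (lam k - α) ^ 2 := by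
    intro k hk
    have h1 := hgap k k0 hk
    have h2 : |lam k - lam k0| ≤ |lam k - α| + |lam k0 - α| := by
      rw [show lam k - lam k0 = (lam k - α) - (lam k0 - α) by ring]
      exact abs_sub _ _
    have h3 : s ≤ |lam k - α| := by linarith
    have h4 : (0:ℝ) ≤ s := by linarith
    nlinarith [abs_nonneg (lam k - α), sq_abs (lam k - α)]
  have hβk : ∀ k : Fin n, k ≠ k0 → t ^ 2 ≤ (lam k - β) ^ 2 := by
    intro k hk
    have h1 := hgap k k0 hk
    have h2 : |lam k - lam k0| ≤ |lam k - β| + d + |lam k0 - α| := by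
      rw [show lam k - lam k0 = (lam k - β) + (α - β) * (-1) - (lam k0 - α) by ring]
      calc |lam k - β + (α - β) * (-1) - (lam k0 - α)|
          ≤ |lam k - β + (α - β) * (-1)| + |lam k0 - α| := abs_sub _ _
        _ ≤ |lam k - β| + |(α - β) * (-1)| + |lam k0 - α| := by
            have := abs_add_le (lam k - β) ((α - β) * (-1)); linarith
        _ = |lam k - β| + d + |lam k0 - α| := by rw [abs_mul]; simp [hd]
    have h3 : t ≤ |lam k - β| := by linarith
    nlinarith [abs_nonneg (lam k - β), sq_abs (lam k - β)]
  set Sa : ℝ := ∑ k ∈ Finset.univ.erase k0, a k ^ 2 with hSa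
  set Sb : ℝ := ∑ k ∈ Finset.univ.erase k0, b k ^ 2 with hSb
  have hSa0 : 0 ≤ Sa := Finset.sum_nonneg (fun k _ => sq_nonneg _)
  have hSb0 : 0 ≤ Sb := Finset.sum_nonneg (fun k _ => sq_nonneg _)
  have hSaB : s ^ 2 * Sa ≤ ri := by
    have h1 : ∑ k ∈ Finset.univ.erase k0, s ^ 2 * a k ^ 2
        ≤ ∑ k ∈ Finset.univ.erase k0, a k ^ 2 * (lam k - α) ^ 2 := by
      apply Finset.sum_le_sum
      intro k hk
      have h := mul_le_mul_of_nonneg_left (hαk k (Finset.ne_of_mem_erase hk)) (sq_nonneg (a k))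
      linarith
    have h2 : ∑ k ∈ Finset.univ.erase k0, a k ^ 2 * (lam k - α) ^ 2
        ≤ ∑ k, a k ^ 2 * (lam k - α) ^ 2 := by
      apply Finset.sum_le_sum_of_subset_of_nonneg (Finset.erase_subset _ _)
      intro k _ _; positivity
    rw [← Finset.mul_sum] at h1
    linarith
  have hSbB : t ^ 2 * Sb ≤ rj := by
    have h1 : ∑ k ∈ Finset.univ.erase k0, t ^ 2 * b k ^ 2
        ≤ ∑ k ∈ Finset.univ.erase k0, b k ^ 2 * (lam k - β) ^ 2 := by
      apply Finset.sum_le_sum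
      intro k hk
      have h := mul_le_mul_of_nonneg_left (hβk k (Finset.ne_of_mem_erase hk)) (sq_nonneg (b k))
      linarith
    have h2 : ∑ k ∈ Finset.univ.erase k0, b k ^ 2 * (lam k - β) ^ 2
        ≤ ∑ k, b k ^ 2 * (lam k - β) ^ 2 := by
      apply Finset.sum_le_sum_of_subset_of_nonneg (Finset.erase_subset _ _)
      intro k _ _; positivity
    rw [← Finset.mul_sum] at h1
    linarith
  have hak0 : a k0 ^ 2 = 1 - Sa := by
    have h := Finset.sum_erase_add Finset.univ (fun k => a k ^ 2) (Finset.mem_univ k0)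
    simp only [ha] at h
    rw [← hSa] at h; linarith
  have hbk0 : b k0 ^ 2 = 1 - Sb := by
    have h := Finset.sum_erase_add Finset.univ (fun k => b k ^ 2) (Finset.mem_univ k0)
    simp only [hb] at h
    rw [← hSb] at h; linarith
  have habk0 : a k0 * b k0 = - ∑ k ∈ Finset.univ.erase k0, a k * b k := by
    have h := Finset.sum_erase_add Finset.univ (fun k => a k * b k) (Finset.mem_univ k0)
    simp only [hab] at h
    linarith
  have hCS : (∑ k ∈ Finset.univ.erase k0, a k * b k) ^ 2 ≤ Sa * Sb :=
    Finset.sum_mul_sq_le_sq_mul_sq (Finset.univ.erase k0) a b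
  have hprod : (1 - Sa) * (1 - Sb) ≤ Sa * Sb := by
    calc (1 - Sa) * (1 - Sb) = a k0 ^ 2 * b k0 ^ 2 := by rw [hak0, hbk0]
    _ = (a k0 * b k0) ^ 2 := by ring
    _ = (∑ k ∈ Finset.univ.erase k0, a k * b k) ^ 2 := by rw [habk0]; ring
    _ ≤ Sa * Sb := hCS
  have hge1 : 1 ≤ Sa + Sb := by nlinarith
  -- final contradiction: t²(Sa + Sb) ≤ ri + rj ≤ ε² < t²
  have h5 : t ^ 2 * Sa ≤ ri := by
    have h51 : t ^ 2 * Sa ≤ s ^ 2 * Sa :=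
      mul_le_mul_of_nonneg_right (by nlinarith) hSa0
    linarith
  have h6 : ε ^ 2 < t ^ 2 := by nlinarith
  have h7 : t ^ 2 * (Sa + Sb) ≤ ε ^ 2 := by rw [mul_add]; linarith
  have h8 : t ^ 2 * 1 ≤ t ^ 2 * (Sa + Sb) :=
    mul_le_mul_of_nonneg_left hge1 (le_of_lt (by positivity))
  linarith

/-- **Domain radius bound**: if `C_e` has distinct eigenvalues with spectral gap `g`,
then the diagonal separation satisfies
`min_{i≠j} |A_ii − A_jj| ≥ g − 2√(2 f(M)) = g − 2‖off(A)‖_F`. -/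
theorem diagonal_separation_lower_bound {n : ℕ} (hn : 2 ≤ n)
    (Ce : Matrix (Fin n) (Fin n) ℝ) (hCe : Ceᵀ = Ce)
    (lam : Fin n → ℝ) (hdistinct : ∀ i j : Fin n, i < j → lam j < lam i)
    (Q : Matrix (Fin n) (Fin n) ℝ) (hQ : Qᵀ * Q = 1)
    (hdiag : Qᵀ * Ce * Q = Matrix.diagonal lam)
    (g : ℝ) (hgpos : 0 < g)
    (hgap : ∀ i j : Fin n, i ≠ j → g ≤ |lam i - lam j|)
    (M : Matrix (Fin n) (Fin n) ℝ) (hM : Mᵀ * M = 1) :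
    (∀ i j : Fin n, i ≠ j →
      g - 2 * Real.sqrt (2 * objF Ce M) ≤ |rotA Ce M i i - rotA Ce M j j|) ∧
    (∀ i j : Fin n, i ≠ j →
      g - 2 * frobNorm (rotA Ce M - diagPart (rotA Ce M))
        ≤ |rotA Ce M i i - rotA Ce M j j|) := by
  set A := rotA Ce M with hA
  have hQQ : Q * Qᵀ = 1 := mul_eq_one_comm.mp hQ
  set U := Qᵀ * M with hUdef
  have hUU : Uᵀ * U = 1 := by
    rw [hUdef, Matrix.transpose_mul, Matrix.transpose_transpose, Matrix.mul_assoc,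
      ← Matrix.mul_assoc Q Qᵀ M, hQQ, Matrix.one_mul, hM]
  have hUUT : U * Uᵀ = 1 := mul_eq_one_comm.mp hUU
  have hCeQ : Ce = Q * Matrix.diagonal lam * Qᵀ := by
    rw [← hdiag]
    have h : Q * (Qᵀ * Ce * Q) * Qᵀ = (Q * Qᵀ) * Ce * (Q * Qᵀ) := by
      simp only [Matrix.mul_assoc]
    rw [h, hQQ, Matrix.one_mul, Matrix.mul_one]
  have hAU : A = Uᵀ * Matrix.diagonal lam * U := by
    rw [hA]
    show Mᵀ * Ce * M = _
    rw [hCeQ, hUdef, Matrix.transpose_mul, Matrix.transpose_transpose]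
    simp only [Matrix.mul_assoc]
  have hAsym : ∀ k l, A l k = A k l := by
    intro k l
    have h : Aᵀ = A := by
      rw [hA]
      show (Mᵀ * Ce * M)ᵀ = Mᵀ * Ce * M
      rw [Matrix.transpose_mul, Matrix.transpose_mul, Matrix.transpose_transpose, hCe]
      simp only [Matrix.mul_assoc]
    calc A l k = Aᵀ k l := rfl
    _ = A k l := by rw [h]
  have hentry : ∀ k l, A k l = ∑ m, lam m * (U m k * U m l) := by
    intro k l; rw [hAU]; exact conj_diag_apply U lam k l
  have hAA : A * A = Uᵀ * Matrix.diagonal (fun m => lam m * lam m) * U := by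
    rw [hAU]
    have h1 : Uᵀ * Matrix.diagonal lam * U * (Uᵀ * Matrix.diagonal lam * U)
        = Uᵀ * (Matrix.diagonal lam * ((U * Uᵀ) * (Matrix.diagonal lam * U))) := by
      simp only [Matrix.mul_assoc]
    rw [h1, hUUT, Matrix.one_mul, ← Matrix.mul_assoc (Matrix.diagonal lam),
      Matrix.diagonal_mul_diagonal, ← Matrix.mul_assoc]
  have hA2entry : ∀ i, (A * A) i i = ∑ m, (lam m * lam m) * (U m i * U m i) := by
    intro i; rw [hAA]; exact conj_diag_apply U _ i i
  have hA2diag : ∀ i, (A * A) i i = ∑ l, (A i l) ^ 2 := by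
    intro i; rw [Matrix.mul_apply]
    apply Finset.sum_congr rfl
    intro l _; rw [hAsym i l]; ring
  have hnormU : ∀ i, ∑ m, (U m i) ^ 2 = 1 := by
    intro i
    have h := congrFun (congrFun hUU i) i
    simp only [Matrix.mul_apply, Matrix.transpose_apply, Matrix.one_apply_eq] at h
    rw [← h]
    exact Finset.sum_congr rfl (fun m _ => by ring)
  have horth : ∀ i j : Fin n, i ≠ j → ∑ m, U m i * U m j = 0 := by
    intro i j hij
    have h := congrFun (congrFun hUU i) j
    simp only [Matrix.mul_apply, Matrix.transpose_apply, Matrix.one_apply_ne hij] at h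
    exact h
  have hdiagA : ∀ i, ∑ m, (U m i) ^ 2 * lam m = A i i := by
    intro i
    rw [hentry i i]
    exact Finset.sum_congr rfl (fun m _ => by ring)
  have hsq : ∀ i, ∑ m, (U m i) ^ 2 * lam m ^ 2 = ∑ l, (A i l) ^ 2 := by
    intro i
    rw [← hA2diag i, hA2entry i]
    exact Finset.sum_congr rfl (fun m _ => by ring)
  have hoffrow : ∀ i, ∑ l, ((A - diagPart A) i l) ^ 2 = ∑ l, (A i l) ^ 2 - (A i i) ^ 2 := by
    intro i
    have hterm : ∀ l, ((A - diagPart A) i l) ^ 2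
        = (A i l) ^ 2 - (if i = l then (A i i) ^ 2 else 0) := by
      intro l
      by_cases h : i = l
      · subst h
        simp [diagPart, Matrix.sub_apply, Matrix.diagonal_apply_eq]
      · simp [diagPart, Matrix.sub_apply, Matrix.diagonal_apply_ne _ h, if_neg h]
    simp only [hterm]
    rw [Finset.sum_sub_distrib, Finset.sum_ite_eq]
    simp
  have hres : ∀ i, ∑ m, (U m i) ^ 2 * (lam m - A i i) ^ 2
      = ∑ l, ((A - diagPart A) i l) ^ 2 := by
    intro i
    have expand : ∑ m, (U m i) ^ 2 * (lam m - A i i) ^ 2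
        = ∑ m, ((U m i) ^ 2 * lam m ^ 2 - 2 * A i i * ((U m i) ^ 2 * lam m)
            + (A i i) ^ 2 * (U m i) ^ 2) :=
      Finset.sum_congr rfl (fun m _ => by ring)
    rw [expand, Finset.sum_add_distrib, Finset.sum_sub_distrib, ← Finset.mul_sum,
      ← Finset.mul_sum, hsq i, hdiagA i, hnormU i, hoffrow i]
    ring
  set F := frobNorm (A - diagPart A) with hF
  have hF0 : 0 ≤ F := by rw [hF]; exact Real.sqrt_nonneg _
  have hFsq : F ^ 2 = ∑ k, ∑ l, ((A - diagPart A) k l) ^ 2 := by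
    rw [hF]
    exact Real.sq_sqrt (Finset.sum_nonneg fun k _ =>
      Finset.sum_nonneg fun l _ => sq_nonneg _)
  have main : ∀ i j : Fin n, i ≠ j → g - 2 * F ≤ |A i i - A j j| := by
    intro i j hij
    set ri : ℝ := ∑ l, ((A - diagPart A) i l) ^ 2 with hri
    set rj : ℝ := ∑ l, ((A - diagPart A) j l) ^ 2 with hrj
    have hsumF : ri + rj ≤ F ^ 2 := by
      rw [hFsq]
      have hpair : ri + rj = ∑ k ∈ ({i, j} : Finset (Fin n)),
          ∑ l, ((A - diagPart A) k l) ^ 2 := by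
        rw [Finset.sum_pair hij]
      rw [hpair]
      exact Finset.sum_le_sum_of_subset_of_nonneg (Finset.subset_univ _)
        (fun k _ _ => Finset.sum_nonneg fun l _ => sq_nonneg _)
    exact key_ineq lam (fun m => U m i) (fun m => U m j) g (A i i) (A j j) ri rj F
      hgap (hnormU i) (hnormU j) (horth i j hij) hF0
      (le_of_eq (hres i)) (le_of_eq (hres j))
      (Finset.sum_nonneg fun l _ => sq_nonneg _) hsumF
  constructor
  · intro i j hij
    have hobj : Real.sqrt (2 * objF Ce M) = F := by
      have h2 : 2 * objF Ce M = F ^ 2 := by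
        rw [objF, ← hA, ← hF]; ring
      rw [h2, Real.sqrt_sq hF0]
    rw [hobj]
    exact main i j hij
  · exact main
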